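/- Equality of induced hamiltonian derivations: let P ∈ ℂ[[X₁,…,Xₙ]] and set gᵢ(λ) = (∂P/∂Xᵢ)(λ₁,…,λₙ) ∈ ℂ[[λ]]. Then for every F ∈ ℂ[[λ,q,p]], {F, P(q₁p₁,…,qₙpₙ)} − {F, Σᵢ₌₁ⁿ gᵢ(λ)·(qᵢpᵢ − λᵢ)} ∈ I, where I is the ideal generated by q₁p₁−λ₁,…,qₙpₙ−λₙ; that is, the two hamiltonian derivations coincide as derivations of ℂ[[λ,q,p]]/I. -/

import Mathlib

/- ℂ[[λ,q,p]] is `MvPowerSeries (Fin n ⊕ (Fin n ⊕ Fin n)) ℂ`, where `Sum.inl i` is the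
variable `λᵢ`, `Sum.inr (Sum.inl i)` is `qᵢ` and `Sum.inr (Sum.inr i)` is `pᵢ`.
ℂ[[q,p]] is `MvPowerSeries (Fin n ⊕ Fin n) ℂ` (`Sum.inl i` is `qᵢ`, `Sum.inr i` is `pᵢ`). -/

open MvPowerSeries
open scoped Classical

/-- Partial derivative of a multivariate formal power series. -/
noncomputable def pd {σ : Type} [DecidableEq σ] (x : σ) (f : MvPowerSeries σ ℂ) :
    MvPowerSeries σ ℂ :=
  fun m => ((m x : ℂ) + 1) * coeff (m + Finsupp.single x 1) f

/-- Total degree of a monomial. -/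
def mdeg {σ : Type} (m : σ →₀ ℕ) : ℕ := m.sum fun _ k => k

/-- `f` has order ≥ `a`: every monomial of `f` has total degree ≥ `a`. -/
def OrdGe {σ : Type} (f : MvPowerSeries σ ℂ) (a : ℕ) : Prop :=
  ∀ m, mdeg m < a → coeff m f = 0

/-- The Poisson bracket on ℂ[[q,p]]. -/
noncomputable def pois {n : ℕ} (f g : MvPowerSeries (Fin n ⊕ Fin n) ℂ) :
    MvPowerSeries (Fin n ⊕ Fin n) ℂ :=
  ∑ i : Fin n, (pd (Sum.inl i) f * pd (Sum.inr i) g - pd (Sum.inr i) f * pd (Sum.inl i) g)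

/-- The ℂ[[λ]]-linear Poisson bracket on ℂ[[λ,q,p]] (the `λᵢ` are constants):
`{f,g} = Σᵢ ∂_{qᵢ}f ∂_{pᵢ}g − ∂_{pᵢ}f ∂_{qᵢ}g`. -/
noncomputable def pois3 {n : ℕ} (f g : MvPowerSeries (Fin n ⊕ (Fin n ⊕ Fin n)) ℂ) :
    MvPowerSeries (Fin n ⊕ (Fin n ⊕ Fin n)) ℂ :=
  ∑ i : Fin n,
    (pd (Sum.inr (Sum.inl i)) f * pd (Sum.inr (Sum.inr i)) g -
      pd (Sum.inr (Sum.inr i)) f * pd (Sum.inr (Sum.inl i)) g)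

/-- The ideal `I ⊂ ℂ[[λ,q,p]]` generated by `q₁p₁−λ₁, …, qₙpₙ−λₙ`. -/
noncomputable def pqIdeal (n : ℕ) : Ideal (MvPowerSeries (Fin n ⊕ (Fin n ⊕ Fin n)) ℂ) :=
  Ideal.span (Set.range fun i : Fin n =>
    X (Sum.inr (Sum.inl i)) * X (Sum.inr (Sum.inr i)) - X (Sum.inl i))

/-- Substitution `P(λ₁,…,λₙ) ∈ ℂ[[λ,q,p]]` of the variables `λᵢ` into a formal power
series `P ∈ ℂ[[X₁,…,Xₙ]]` (the continuous algebra map sending `Xᵢ` to `λᵢ`). -/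
noncomputable def substL {n : ℕ} (P : MvPowerSeries (Fin n) ℂ) :
    MvPowerSeries (Fin n ⊕ (Fin n ⊕ Fin n)) ℂ :=
  fun m => if ∀ v : Fin n ⊕ Fin n, m (Sum.inr v) = 0 then
    coeff (Finsupp.comapDomain Sum.inl m Sum.inl_injective.injOn) P else 0

/-- Substitution `P(q₁p₁,…,qₙpₙ) ∈ ℂ[[λ,q,p]]` of the products `qᵢpᵢ` into a formal
power series `P ∈ ℂ[[X₁,…,Xₙ]]`: since `P(q₁p₁,…,qₙpₙ) = Σ_d (coeff_d P) q^d p^d`,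
its coefficient on `λ^a q^I p^J` is `coeff_I P` if `a = 0` and `I = J`, and `0` otherwise. -/
noncomputable def substQP3 {n : ℕ} (P : MvPowerSeries (Fin n) ℂ) :
    MvPowerSeries (Fin n ⊕ (Fin n ⊕ Fin n)) ℂ :=
  fun m => if (∀ i : Fin n, m (Sum.inl i) = 0) ∧
      (∀ i : Fin n, m (Sum.inr (Sum.inl i)) = m (Sum.inr (Sum.inr i))) then
    coeff (Finsupp.comapDomain (fun i : Fin n => Sum.inr (Sum.inl i)) m
      ((Sum.inr_injective.comp Sum.inl_injective).injOn)) P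
  else 0

lemma coeff_pd {σ : Type} [DecidableEq σ] (x : σ) (f : MvPowerSeries σ ℂ) (m : σ →₀ ℕ) :
    coeff m (pd x f) = ((m x : ℂ) + 1) * coeff (m + Finsupp.single x 1) f := rfl

lemma pd_sub {σ : Type} [DecidableEq σ] (x : σ) (f g : MvPowerSeries σ ℂ) :
    pd x (f - g) = pd x f - pd x g := by
  ext m
  simp only [coeff_pd, map_sub, mul_sub]

lemma pd_sum {σ ι : Type} [DecidableEq σ] (x : σ) (s : Finset ι) (f : ι → MvPowerSeries σ ℂ) :
    pd x (∑ i ∈ s, f i) = ∑ i ∈ s, pd x (f i) := by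
  ext m
  simp only [coeff_pd, map_sum, Finset.mul_sum]

lemma pd_monomial {σ : Type} [DecidableEq σ] (x : σ) (k : σ →₀ ℕ) (a : ℂ) :
    pd x (monomial k a) = (k x : ℂ) • monomial (k - Finsupp.single x 1) a := by
  ext m
  rw [coeff_pd, map_smul, coeff_monomial, coeff_monomial, smul_eq_mul]
  by_cases hm : m + Finsupp.single x 1 = k
  · have hk : k - Finsupp.single x 1 = m := by rw [← hm, add_tsub_cancel_right]
    rw [if_pos hm, if_pos hk.symm]
    have hkx : k x = m x + 1 := by
      rw [← hm]; simp [Finsupp.add_apply, Finsupp.single_apply]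
    rw [hkx]; push_cast; ring
  · rw [if_neg hm, mul_zero]
    rcases Nat.eq_zero_or_pos (k x) with h | h
    · rw [h, Nat.cast_zero, zero_mul]
    · rw [if_neg, mul_zero]
      intro h2
      apply hm
      ext y
      have h3 := DFunLike.congr_fun h2 y
      simp only [Finsupp.tsub_apply, Finsupp.single_apply, Finsupp.add_apply] at h3 ⊢
      rcases eq_or_ne x y with rfl | hxy
      · simp only [if_pos rfl, if_true] at h3 ⊢; omega
      · simp only [if_neg hxy] at h3 ⊢; omega

lemma pd_inr_mul {α β : Type} [DecidableEq α] [DecidableEq β]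
    (f g : MvPowerSeries (α ⊕ β) ℂ)
    (hf : ∀ (m : (α ⊕ β) →₀ ℕ) (v : β), m (Sum.inr v) ≠ 0 → coeff m f = 0) (w : β) :
    pd (Sum.inr w) (f * g) = f * pd (Sum.inr w) g := by
  classical
  set x : α ⊕ β := Sum.inr w with hxdef
  set e : (α ⊕ β) →₀ ℕ := Finsupp.single x 1 with hedef
  ext m
  rw [coeff_pd, coeff_mul, coeff_mul, Finset.mul_sum]
  rw [← Finset.sum_filter_of_ne (p := fun p : ((α ⊕ β) →₀ ℕ) × ((α ⊕ β) →₀ ℕ) => p.1 x = 0)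
    (f := fun p => ((m x : ℂ) + 1) * (coeff p.1 f * coeff p.2 g))
    (by
      intro p _ hne
      by_contra hpx
      exact hne (by simp [hf p.1 w hpx]))]
  rw [← Finset.sum_filter_of_ne (p := fun p : ((α ⊕ β) →₀ ℕ) × ((α ⊕ β) →₀ ℕ) => p.1 x = 0)
    (f := fun p => coeff p.1 f * coeff p.2 (pd x g))
    (by
      intro p _ hne
      by_contra hpx
      exact hne (by simp [hf p.1 w hpx]))]
  refine Finset.sum_nbij' (fun p => (p.1, p.2 - e)) (fun p => (p.1, p.2 + e)) ?_ ?_ ?_ ?_ ?_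
  · intro p hp
    simp only [Finset.mem_filter, Finset.HasAntidiagonal.mem_antidiagonal] at hp ⊢
    obtain ⟨hp1, hp2⟩ := hp
    refine ⟨?_, hp2⟩
    ext y
    have h1 := DFunLike.congr_fun hp1 y
    simp only [Finsupp.add_apply, Finsupp.tsub_apply, hedef, Finsupp.single_apply] at h1 ⊢
    rcases eq_or_ne x y with rfl | hxy
    · simp only [if_pos rfl, if_true] at h1 ⊢
      omega
    · simp only [if_neg hxy] at h1 ⊢
      omega
  · intro p hp
    simp only [Finset.mem_filter, Finset.HasAntidiagonal.mem_antidiagonal] at hp ⊢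
    obtain ⟨hp1, hp2⟩ := hp
    exact ⟨by rw [← hp1, ← hedef, add_assoc], hp2⟩
  · intro p hp
    simp only [Finset.mem_filter, Finset.HasAntidiagonal.mem_antidiagonal] at hp
    obtain ⟨hp1, hp2⟩ := hp
    have hp2x : p.2 x = m x + 1 := by
      have h1 := DFunLike.congr_fun hp1 x
      simp only [Finsupp.add_apply, hedef, Finsupp.single_apply, if_pos rfl, if_true] at h1
      omega
    have : p.2 - e + e = p.2 := by
      ext y
      simp only [Finsupp.add_apply, Finsupp.tsub_apply, hedef, Finsupp.single_apply]
      rcases eq_or_ne x y with rfl | hxy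
      · simp only [if_pos rfl, if_true]; omega
      · simp only [if_neg hxy]; omega
    simp [this]
  · intro p hp
    simp [add_tsub_cancel_right]
  · intro p hp
    simp only [Finset.mem_filter, Finset.HasAntidiagonal.mem_antidiagonal] at hp
    obtain ⟨hp1, hp2⟩ := hp
    have hp2x : p.2 x = m x + 1 := by
      have h1 := DFunLike.congr_fun hp1 x
      simp only [Finsupp.add_apply, hedef, Finsupp.single_apply, if_pos rfl, if_true] at h1
      omega
    have hx2 : (p.2 - e) x = m x := by
      simp only [Finsupp.tsub_apply, hedef, Finsupp.single_apply, if_pos rfl, if_true]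
      omega
    have hee : p.2 - e + e = p.2 := by
      ext y
      simp only [Finsupp.add_apply, Finsupp.tsub_apply, hedef, Finsupp.single_apply]
      rcases eq_or_ne x y with rfl | hxy
      · simp only [if_pos rfl, if_true]; omega
      · simp only [if_neg hxy]; omega
    rw [coeff_pd, hx2, hee]
    ring

/-- Mixed substitution: `X i ↦ λᵢ` for `i < k`, `X i ↦ qᵢpᵢ` for `i ≥ k`. -/
noncomputable def Tsub {n : ℕ} (k : ℕ) (Q : MvPowerSeries (Fin n) ℂ) :
    MvPowerSeries (Fin n ⊕ (Fin n ⊕ Fin n)) ℂ :=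
  fun m => if (∀ i : Fin n, (i : ℕ) < k → m (Sum.inr (Sum.inl i)) = 0 ∧ m (Sum.inr (Sum.inr i)) = 0) ∧
      (∀ i : Fin n, k ≤ (i : ℕ) → m (Sum.inl i) = 0) ∧
      (∀ i : Fin n, m (Sum.inr (Sum.inl i)) = m (Sum.inr (Sum.inr i))) then
    coeff (Finsupp.equivFunOnFinite.symm fun i => m (Sum.inl i) + m (Sum.inr (Sum.inl i))) Q
  else 0

/-- Difference quotient in slot `k`. -/
noncomputable def dq {n : ℕ} (k : Fin n) (Q : MvPowerSeries (Fin n) ℂ) :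
    MvPowerSeries (Fin n ⊕ (Fin n ⊕ Fin n)) ℂ :=
  fun m => if (∀ i : Fin n, (i : ℕ) < (k : ℕ) → m (Sum.inr (Sum.inl i)) = 0 ∧ m (Sum.inr (Sum.inr i)) = 0) ∧
      (∀ i : Fin n, (k : ℕ) < (i : ℕ) → m (Sum.inl i) = 0) ∧
      (∀ i : Fin n, m (Sum.inr (Sum.inl i)) = m (Sum.inr (Sum.inr i))) then
    coeff (Finsupp.equivFunOnFinite.symm fun i =>
      m (Sum.inl i) + m (Sum.inr (Sum.inl i)) + if i = k then 1 else 0) Q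
  else 0

lemma Tsub_zero {n : ℕ} (Q : MvPowerSeries (Fin n) ℂ) : Tsub 0 Q = substQP3 Q := by
  ext m
  show Tsub 0 Q m = substQP3 Q m
  unfold Tsub substQP3
  by_cases h : (∀ i : Fin n, m (Sum.inl i) = 0) ∧
      (∀ i : Fin n, m (Sum.inr (Sum.inl i)) = m (Sum.inr (Sum.inr i)))
  · have hA : (Finsupp.equivFunOnFinite.symm fun i : Fin n =>
        m (Sum.inl i) + m (Sum.inr (Sum.inl i)))
        = Finsupp.comapDomain (fun i : Fin n => Sum.inr (Sum.inl i)) m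
          ((Sum.inr_injective.comp Sum.inl_injective).injOn) := by
      ext i
      simp only [Finsupp.coe_equivFunOnFinite_symm, Finsupp.comapDomain_apply]
      rw [h.1 i, zero_add]
    rw [if_pos, if_pos h, hA]
    exact ⟨fun i hi => absurd hi (by omega), fun i _ => h.1 i, h.2⟩
  · rw [if_neg, if_neg h]
    intro ⟨_, h2, h3⟩
    exact h ⟨fun i => h2 i (Nat.zero_le _), h3⟩

lemma Tsub_n {n : ℕ} (Q : MvPowerSeries (Fin n) ℂ) : Tsub n Q = substL Q := by
  ext m
  show Tsub n Q m = substL Q m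
  unfold Tsub substL
  by_cases h : ∀ v : Fin n ⊕ Fin n, m (Sum.inr v) = 0
  · have hA : (Finsupp.equivFunOnFinite.symm fun i : Fin n =>
        m (Sum.inl i) + m (Sum.inr (Sum.inl i)))
        = Finsupp.comapDomain Sum.inl m Sum.inl_injective.injOn := by
      ext i
      simp only [Finsupp.coe_equivFunOnFinite_symm, Finsupp.comapDomain_apply]
      rw [h (Sum.inl i), add_zero]
    rw [if_pos, if_pos h, hA]
    exact ⟨fun i _ => ⟨h (Sum.inl i), h (Sum.inr i)⟩,
        fun i hi => absurd i.isLt (by omega),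
        fun i => by rw [h (Sum.inl i), h (Sum.inr i)]⟩
  · rw [if_neg, if_neg h]
    intro ⟨h1, _, _⟩
    exact h fun v => by
      rcases v with i | i
      exacts [(h1 i i.isLt).1, (h1 i i.isLt).2]


lemma Tsub_step {n : ℕ} (k : Fin n) (Q : MvPowerSeries (Fin n) ℂ) :
    Tsub (k : ℕ) Q - Tsub ((k : ℕ) + 1) Q
      = dq k Q * (X (Sum.inr (Sum.inl k)) * X (Sum.inr (Sum.inr k)) - X (Sum.inl k)) := by
  classical
  have hXX : (X (Sum.inr (Sum.inl k)) * X (Sum.inr (Sum.inr k)) : MvPowerSeries (Fin n ⊕ (Fin n ⊕ Fin n)) ℂ)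
      = monomial (Finsupp.single (Sum.inr (Sum.inl k)) 1 + Finsupp.single (Sum.inr (Sum.inr k)) 1) 1 := by
    rw [X_def, X_def, monomial_mul_monomial, one_mul]
  ext m
  rw [map_sub, hXX, X_def, mul_sub, map_sub, coeff_mul_monomial, coeff_mul_monomial]
  set eqp : (Fin n ⊕ (Fin n ⊕ Fin n)) →₀ ℕ := Finsupp.single (Sum.inr (Sum.inl k)) 1 + Finsupp.single (Sum.inr (Sum.inr k)) 1 with heqp
  set el : (Fin n ⊕ (Fin n ⊕ Fin n)) →₀ ℕ := Finsupp.single (Sum.inl k) 1 with hel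
  have heqp_apply : ∀ y, eqp y = (if y = (Sum.inr (Sum.inl k)) then 1 else 0) + (if y = (Sum.inr (Sum.inr k)) then 1 else 0) := by
    intro y
    rw [heqp, Finsupp.add_apply, Finsupp.single_apply, Finsupp.single_apply]
    congr 1 <;> simp [eq_comm]
  have hel_apply : ∀ y, el y = if y = (Sum.inl k) then 1 else 0 := by
    intro y
    rw [hel, Finsupp.single_apply]
    simp [eq_comm]
  have hql : (Sum.inr (Sum.inl k) : Fin n ⊕ (Fin n ⊕ Fin n)) ≠ Sum.inl k := by simp
  have hpl : (Sum.inr (Sum.inr k) : Fin n ⊕ (Fin n ⊕ Fin n)) ≠ Sum.inl k := by simp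
  have hqp_ne : (Sum.inr (Sum.inl k) : Fin n ⊕ (Fin n ⊕ Fin n)) ≠ Sum.inr (Sum.inr k) := by simp
  -- values of coordinates
  have heqp_le : eqp ≤ m ↔ 1 ≤ m (Sum.inr (Sum.inl k)) ∧ 1 ≤ m (Sum.inr (Sum.inr k)) := by
    rw [Finsupp.le_def]
    constructor
    · intro h
      constructor
      · have := h (Sum.inr (Sum.inl k)); rw [heqp_apply] at this; simpa [hqp_ne] using this
      · have := h (Sum.inr (Sum.inr k)); rw [heqp_apply] at this; simpa [Ne.symm hqp_ne] using this
    · intro ⟨h1, h2⟩ y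
      rw [heqp_apply]
      rcases eq_or_ne y (Sum.inr (Sum.inl k)) with rfl | hy1
      · simpa [hqp_ne] using h1
      · rcases eq_or_ne y (Sum.inr (Sum.inr k)) with rfl | hy2
        · simpa [Ne.symm hqp_ne] using h2
        · simp [hy1, hy2]
  have hel_le : el ≤ m ↔ 1 ≤ m (Sum.inl k) := by
    rw [hel, Finsupp.single_le_iff]
  -- coordinate computations
  have hsub1 : ∀ i : Fin n, (m - eqp) (Sum.inl i) = m (Sum.inl i) := by
    intro i
    rw [Finsupp.tsub_apply, heqp_apply]
    simp
  have hsub2 : ∀ i : Fin n, (m - eqp) (Sum.inr (Sum.inl i))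
      = m (Sum.inr (Sum.inl i)) - (if i = k then 1 else 0) := by
    intro i
    rw [Finsupp.tsub_apply, heqp_apply]
    simp
  have hsub3 : ∀ i : Fin n, (m - eqp) (Sum.inr (Sum.inr i))
      = m (Sum.inr (Sum.inr i)) - (if i = k then 1 else 0) := by
    intro i
    rw [Finsupp.tsub_apply, heqp_apply]
    simp
  have hsub4 : ∀ i : Fin n, (m - el) (Sum.inl i)
      = m (Sum.inl i) - (if i = k then 1 else 0) := by
    intro i
    rw [Finsupp.tsub_apply, hel_apply]
    simp
  have hsub5 : ∀ i : Fin n, (m - el) (Sum.inr (Sum.inl i)) = m (Sum.inr (Sum.inl i)) := by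
    intro i
    rw [Finsupp.tsub_apply, hel_apply]
    simp
  have hsub6 : ∀ i : Fin n, (m - el) (Sum.inr (Sum.inr i)) = m (Sum.inr (Sum.inr i)) := by
    intro i
    rw [Finsupp.tsub_apply, hel_apply]
    simp
  have hifk : (if k = k then 1 else 0) = 1 := by simp
  simp only [coeff_apply, mul_one]
  unfold Tsub dq
  by_cases hb : (∀ i : Fin n, (i : ℕ) < (k : ℕ) →
        m (Sum.inr (Sum.inl i)) = 0 ∧ m (Sum.inr (Sum.inr i)) = 0) ∧
      (∀ i : Fin n, (k : ℕ) < (i : ℕ) → m (Sum.inl i) = 0) ∧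
      (∀ i : Fin n, i ≠ k → m (Sum.inr (Sum.inl i)) = m (Sum.inr (Sum.inr i)))
  · obtain ⟨hb1, hb2, hb3⟩ := hb
    by_cases hqp : m (Sum.inr (Sum.inl k)) = m (Sum.inr (Sum.inr k))
    · -- balanced at k
      have hdq_eqp : (∀ i : Fin n, (i : ℕ) < (k : ℕ) →
            (m - eqp) (Sum.inr (Sum.inl i)) = 0 ∧ (m - eqp) (Sum.inr (Sum.inr i)) = 0) ∧
          (∀ i : Fin n, (k : ℕ) < (i : ℕ) → (m - eqp) (Sum.inl i) = 0) ∧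
          (∀ i : Fin n, (m - eqp) (Sum.inr (Sum.inl i)) = (m - eqp) (Sum.inr (Sum.inr i))) := by
        refine ⟨fun i hi => ?_, fun i hi => ?_, fun i => ?_⟩
        · rw [hsub2, hsub3]
          have hik : i ≠ k := by intro h; subst h; omega
          rw [if_neg hik]
          have := hb1 i hi
          omega
        · rw [hsub1]; exact hb2 i hi
        · rw [hsub2, hsub3]
          rcases eq_or_ne i k with rfl | hik
          · rw [hqp]
          · rw [hb3 i hik]
      have hdq_el : (∀ i : Fin n, (i : ℕ) < (k : ℕ) →
            (m - el) (Sum.inr (Sum.inl i)) = 0 ∧ (m - el) (Sum.inr (Sum.inr i)) = 0) ∧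
          (∀ i : Fin n, (k : ℕ) < (i : ℕ) → (m - el) (Sum.inl i) = 0) ∧
          (∀ i : Fin n, (m - el) (Sum.inr (Sum.inl i)) = (m - el) (Sum.inr (Sum.inr i))) := by
        refine ⟨fun i hi => ?_, fun i hi => ?_, fun i => ?_⟩
        · rw [hsub5, hsub6]; exact hb1 i hi
        · rw [hsub4]
          have hik : i ≠ k := by intro h; subst h; omega
          rw [if_neg hik, hb2 i hi]
        · rw [hsub5, hsub6]
          rcases eq_or_ne i k with rfl | hik
          · exact hqp
          · exact hb3 i hik
      have hTk_pos : m (Sum.inl k) = 0 → (∀ i : Fin n, (i : ℕ) < (k : ℕ) →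
            m (Sum.inr (Sum.inl i)) = 0 ∧ m (Sum.inr (Sum.inr i)) = 0) ∧
          (∀ i : Fin n, (k : ℕ) ≤ (i : ℕ) → m (Sum.inl i) = 0) ∧
          (∀ i : Fin n, m (Sum.inr (Sum.inl i)) = m (Sum.inr (Sum.inr i))) := by
        intro hml
        refine ⟨hb1, fun i hi => ?_, fun i => ?_⟩
        · rcases eq_or_ne i k with rfl | hik
          · exact hml
          · exact hb2 i (by have := Fin.val_ne_of_ne hik; omega)
        · rcases eq_or_ne i k with rfl | hik
          · exact hqp
          · exact hb3 i hik
      have hTk_neg : m (Sum.inl k) ≠ 0 → ¬((∀ i : Fin n, (i : ℕ) < (k : ℕ) →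
            m (Sum.inr (Sum.inl i)) = 0 ∧ m (Sum.inr (Sum.inr i)) = 0) ∧
          (∀ i : Fin n, (k : ℕ) ≤ (i : ℕ) → m (Sum.inl i) = 0) ∧
          (∀ i : Fin n, m (Sum.inr (Sum.inl i)) = m (Sum.inr (Sum.inr i)))) := by
        intro hml ⟨_, c2, _⟩
        exact hml (c2 k (by omega))
      have hTk1_pos : m (Sum.inr (Sum.inl k)) = 0 → (∀ i : Fin n, (i : ℕ) < (k : ℕ) + 1 →
            m (Sum.inr (Sum.inl i)) = 0 ∧ m (Sum.inr (Sum.inr i)) = 0) ∧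
          (∀ i : Fin n, (k : ℕ) + 1 ≤ (i : ℕ) → m (Sum.inl i) = 0) ∧
          (∀ i : Fin n, m (Sum.inr (Sum.inl i)) = m (Sum.inr (Sum.inr i))) := by
        intro hmq
        refine ⟨fun i hi => ?_, fun i hi => hb2 i (by omega), fun i => ?_⟩
        · rcases eq_or_ne i k with rfl | hik
          · exact ⟨hmq, by omega⟩
          · exact hb1 i (by have := Fin.val_ne_of_ne hik; omega)
        · rcases eq_or_ne i k with rfl | hik
          · exact hqp
          · exact hb3 i hik
      have hTk1_neg : m (Sum.inr (Sum.inl k)) ≠ 0 → ¬((∀ i : Fin n, (i : ℕ) < (k : ℕ) + 1 →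
            m (Sum.inr (Sum.inl i)) = 0 ∧ m (Sum.inr (Sum.inr i)) = 0) ∧
          (∀ i : Fin n, (k : ℕ) + 1 ≤ (i : ℕ) → m (Sum.inl i) = 0) ∧
          (∀ i : Fin n, m (Sum.inr (Sum.inl i)) = m (Sum.inr (Sum.inr i)))) := by
        intro hmq ⟨c1, _, _⟩
        exact hmq (c1 k (by omega)).1
      by_cases hml : m (Sum.inl k) = 0 <;> by_cases hmq : m (Sum.inr (Sum.inl k)) = 0
      · -- ml = 0, mq = 0
        rw [if_pos (hTk_pos hml), if_pos (hTk1_pos hmq),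
          if_neg (by rw [heqp_le]; omega), if_neg (by rw [hel_le]; omega), sub_self]
        have hJ : (Finsupp.equivFunOnFinite.symm fun i : Fin n =>
            m (Sum.inl i) + m (Sum.inr (Sum.inl i)))
            = (Finsupp.equivFunOnFinite.symm fun i : Fin n =>
            m (Sum.inl i) + m (Sum.inr (Sum.inl i))) := rfl
        rw [sub_self]
      · -- ml = 0, mq ≥ 1
        rw [if_pos (hTk_pos hml), if_neg (hTk1_neg hmq), if_pos (heqp_le.2 (by omega)),
          if_pos hdq_eqp, if_neg (by rw [hel_le]; omega), sub_zero, sub_zero]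
        have hJ : (Finsupp.equivFunOnFinite.symm fun i : Fin n =>
            (m - eqp) (Sum.inl i) + (m - eqp) (Sum.inr (Sum.inl i)) + if i = k then 1 else 0)
            = (Finsupp.equivFunOnFinite.symm fun i : Fin n =>
            m (Sum.inl i) + m (Sum.inr (Sum.inl i))) := by
          ext i
          simp only [Finsupp.coe_equivFunOnFinite_symm]
          rw [hsub1, hsub2]
          rcases eq_or_ne i k with rfl | hik
          · rw [hifk]; omega
          · rw [if_neg hik]; omega
        rw [hJ]
      · -- ml ≥ 1, mq = 0
        rw [if_neg (hTk_neg hml), if_pos (hTk1_pos hmq), if_neg (by rw [heqp_le]; omega),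
          if_pos (hel_le.2 (by omega)), if_pos hdq_el, zero_sub, zero_sub]
        have hJ : (Finsupp.equivFunOnFinite.symm fun i : Fin n =>
            (m - el) (Sum.inl i) + (m - el) (Sum.inr (Sum.inl i)) + if i = k then 1 else 0)
            = (Finsupp.equivFunOnFinite.symm fun i : Fin n =>
            m (Sum.inl i) + m (Sum.inr (Sum.inl i))) := by
          ext i
          simp only [Finsupp.coe_equivFunOnFinite_symm]
          rw [hsub4, hsub5]
          rcases eq_or_ne i k with rfl | hik
          · rw [hifk]; omega
          · rw [if_neg hik]; omega
        rw [hJ]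
      · -- ml ≥ 1, mq ≥ 1
        rw [if_neg (hTk_neg hml), if_neg (hTk1_neg hmq), if_pos (heqp_le.2 (by omega)),
          if_pos (hel_le.2 (by omega)), if_pos hdq_eqp, if_pos hdq_el, sub_self]
        have hJ : (Finsupp.equivFunOnFinite.symm fun i : Fin n =>
            (m - eqp) (Sum.inl i) + (m - eqp) (Sum.inr (Sum.inl i)) + if i = k then 1 else 0)
            = (Finsupp.equivFunOnFinite.symm fun i : Fin n =>
            (m - el) (Sum.inl i) + (m - el) (Sum.inr (Sum.inl i)) + if i = k then 1 else 0) := by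
          ext i
          simp only [Finsupp.coe_equivFunOnFinite_symm]
          rw [hsub1, hsub2, hsub4, hsub5]
          rcases eq_or_ne i k with rfl | hik
          · rw [hifk]; omega
          · rw [if_neg hik]; omega
        rw [hJ, sub_self]
    · -- not balanced at k: everything vanishes
      rw [if_neg, if_neg, sub_self]
      · by_cases hle1 : eqp ≤ m
        · rw [if_pos hle1, if_neg]
          · by_cases hle2 : el ≤ m
            · rw [if_pos hle2, if_neg, sub_self]
              intro ⟨_, _, c3⟩
              have := c3 k
              rw [hsub5, hsub6] at this
              exact hqp this
            · rw [if_neg hle2, sub_zero]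
          · intro ⟨_, _, c3⟩
            have := c3 k
            rw [hsub2, hsub3, hifk] at this
            have hle := heqp_le.1 hle1
            omega
        · rw [if_neg hle1, zero_sub, eq_comm, neg_eq_zero]
          by_cases hle2 : el ≤ m
          · rw [if_pos hle2, if_neg]
            intro ⟨_, _, c3⟩
            have := c3 k
            rw [hsub5, hsub6] at this
            exact hqp this
          · rw [if_neg hle2]
      · intro ⟨c1, _, _⟩
        exact hqp ((c1 k (by omega)).1.trans (c1 k (by omega)).2.symm)
      · intro ⟨_, _, c3⟩
        exact hqp (c3 k)
  · -- base conditions fail: everything vanishes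
    rw [if_neg, if_neg, sub_self]
    · by_cases hle1 : eqp ≤ m
      · rw [if_pos hle1, if_neg]
        · by_cases hle2 : el ≤ m
          · rw [if_pos hle2, if_neg, sub_self]
            intro ⟨c1, c2, c3⟩
            refine hb ⟨fun i hi => ?_, fun i hi => ?_, fun i hik => ?_⟩
            · have := c1 i hi
              rw [hsub5, hsub6] at this
              exact this
            · have := c2 i hi
              rw [hsub4, if_neg (show ¬i = k by intro h; rw [h] at hi; omega)] at this
              omega
            · have := c3 i
              rw [hsub5, hsub6] at this
              exact this
          · rw [if_neg hle2, sub_zero]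
        · intro ⟨c1, c2, c3⟩
          refine hb ⟨fun i hi => ?_, fun i hi => ?_, fun i hik => ?_⟩
          · have := c1 i hi
            rw [hsub2, hsub3, if_neg (show ¬i = k by intro h; rw [h] at hi; omega)] at this
            omega
          · have := c2 i hi
            rw [hsub1] at this
            exact this
          · have := c3 i
            rw [hsub2, hsub3, if_neg hik] at this
            omega
      · rw [if_neg hle1, zero_sub, eq_comm, neg_eq_zero]
        by_cases hle2 : el ≤ m
        · rw [if_pos hle2, if_neg]
          intro ⟨c1, c2, c3⟩
          refine hb ⟨fun i hi => ?_, fun i hi => ?_, fun i hik => ?_⟩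
          · have := c1 i hi
            rw [hsub5, hsub6] at this
            exact this
          · have := c2 i hi
            rw [hsub4, if_neg (show ¬i = k by intro h; rw [h] at hi; omega)] at this
            omega
          · have := c3 i
            rw [hsub5, hsub6] at this
            exact this
        · rw [if_neg hle2]
    · intro ⟨c1, c2, c3⟩
      exact hb ⟨fun i hi => c1 i (by omega), fun i hi => c2 i (by omega), fun i _ => c3 i⟩
    · intro ⟨c1, c2, c3⟩
      exact hb ⟨c1, fun i hi => c2 i (by omega), fun i _ => c3 i⟩

set_option maxHeartbeats 1000000 in
lemma substQP3_sub_substL_mem {n : ℕ} (Q : MvPowerSeries (Fin n) ℂ) :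
    substQP3 Q - substL Q ∈ pqIdeal n := by
  have h0 : substQP3 Q - substL Q = ∑ k ∈ Finset.range n, (Tsub k Q - Tsub (k + 1) Q) := by
    rw [Finset.sum_range_sub' (f := fun k => Tsub k Q), Tsub_zero, Tsub_n]
  rw [h0]
  apply Ideal.sum_mem
  intro k hk
  rw [Finset.mem_range] at hk
  have h := Tsub_step (⟨k, hk⟩ : Fin n) Q
  rw [show ((⟨k, hk⟩ : Fin n) : ℕ) = k from rfl] at h
  rw [h]
  have hgen : (X (Sum.inr (Sum.inl (⟨k, hk⟩ : Fin n))) * X (Sum.inr (Sum.inr (⟨k, hk⟩ : Fin n)))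
      - X (Sum.inl (⟨k, hk⟩ : Fin n)) : MvPowerSeries (Fin n ⊕ (Fin n ⊕ Fin n)) ℂ) ∈ pqIdeal n :=
    Ideal.subset_span ⟨⟨k, hk⟩, rfl⟩
  exact Ideal.mul_mem_left _ _ hgen

lemma substL_lonly {n : ℕ} (P : MvPowerSeries (Fin n) ℂ) :
    ∀ (m : (Fin n ⊕ (Fin n ⊕ Fin n)) →₀ ℕ) (v : Fin n ⊕ Fin n),
      m (Sum.inr v) ≠ 0 → coeff m (substL P) = 0 := by
  intro m v h
  rw [coeff_apply]
  unfold substL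
  rw [if_neg]
  intro hc
  exact h (hc v)

lemma pd_qv_substQP3 {n : ℕ} (j : Fin n) (P : MvPowerSeries (Fin n) ℂ) :
    pd (Sum.inr (Sum.inl j)) (substQP3 P)
      = substQP3 (pd j P) * X (Sum.inr (Sum.inr j)) := by
  classical
  ext m
  rw [coeff_pd, X_def, coeff_mul_monomial]
  set ej : (Fin n ⊕ (Fin n ⊕ Fin n)) →₀ ℕ := Finsupp.single (Sum.inr (Sum.inl j)) 1 with hej
  set fj : (Fin n ⊕ (Fin n ⊕ Fin n)) →₀ ℕ := Finsupp.single (Sum.inr (Sum.inr j)) 1 with hfj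
  have hadd1 : ∀ i : Fin n, (m + ej) (Sum.inl i) = m (Sum.inl i) := by
    intro i; rw [Finsupp.add_apply, hej, Finsupp.single_apply]; simp
  have hadd2 : ∀ i : Fin n, (m + ej) (Sum.inr (Sum.inl i))
      = m (Sum.inr (Sum.inl i)) + (if i = j then 1 else 0) := by
    intro i; rw [Finsupp.add_apply, hej, Finsupp.single_apply]
    congr 1
    simp [eq_comm]
  have hadd3 : ∀ i : Fin n, (m + ej) (Sum.inr (Sum.inr i)) = m (Sum.inr (Sum.inr i)) := by
    intro i; rw [Finsupp.add_apply, hej, Finsupp.single_apply]; simp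
  have hsub1 : ∀ i : Fin n, (m - fj) (Sum.inl i) = m (Sum.inl i) := by
    intro i; rw [Finsupp.tsub_apply, hfj, Finsupp.single_apply]; simp
  have hsub2 : ∀ i : Fin n, (m - fj) (Sum.inr (Sum.inl i)) = m (Sum.inr (Sum.inl i)) := by
    intro i; rw [Finsupp.tsub_apply, hfj, Finsupp.single_apply]; simp
  have hsub3 : ∀ i : Fin n, (m - fj) (Sum.inr (Sum.inr i))
      = m (Sum.inr (Sum.inr i)) - (if i = j then 1 else 0) := by
    intro i; rw [Finsupp.tsub_apply, hfj, Finsupp.single_apply]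
    congr 1
    simp [eq_comm]
  have hfj_le : fj ≤ m ↔ 1 ≤ m (Sum.inr (Sum.inr j)) := by
    rw [hfj, Finsupp.single_le_iff]
  have hifj : (if j = j then 1 else 0) = 1 := by simp
  simp only [coeff_apply, mul_one]
  unfold substQP3
  by_cases hc : (∀ i : Fin n, m (Sum.inl i) = 0) ∧
      (∀ i : Fin n, m (Sum.inr (Sum.inl i)) + (if i = j then 1 else 0) = m (Sum.inr (Sum.inr i)))
  · have hpj : 1 ≤ m (Sum.inr (Sum.inr j)) := by
      have h2 := hc.2 j
      rw [hifj] at h2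
      omega
    rw [if_pos, if_pos (hfj_le.2 hpj), if_pos]
    · rw [coeff_pd]
      have hK' : Finsupp.comapDomain (fun i : Fin n => Sum.inr (Sum.inl i)) (m - fj)
          ((Sum.inr_injective.comp Sum.inl_injective).injOn)
          = Finsupp.comapDomain (fun i : Fin n => Sum.inr (Sum.inl i)) m
          ((Sum.inr_injective.comp Sum.inl_injective).injOn) := by
        ext i
        simp only [Finsupp.comapDomain_apply]
        rw [hsub2]
      have hKj : (Finsupp.comapDomain (fun i : Fin n => Sum.inr (Sum.inl i)) m
          ((Sum.inr_injective.comp Sum.inl_injective).injOn)) j = m (Sum.inr (Sum.inl j)) := by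
        simp only [Finsupp.comapDomain_apply]
      have hK : Finsupp.comapDomain (fun i : Fin n => Sum.inr (Sum.inl i)) (m + ej)
          ((Sum.inr_injective.comp Sum.inl_injective).injOn)
          = Finsupp.comapDomain (fun i : Fin n => Sum.inr (Sum.inl i)) m
          ((Sum.inr_injective.comp Sum.inl_injective).injOn) + Finsupp.single j 1 := by
        ext i
        simp only [Finsupp.comapDomain_apply, Finsupp.add_apply]
        congr 1
        rw [hej]
        simp [Finsupp.single_apply, eq_comm]
      rw [hK', hKj, hK]
    · constructor
      · intro i
        rw [hsub1]
        exact hc.1 i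
      · intro i
        rw [hsub2, hsub3]
        have := hc.2 i
        omega
    · constructor
      · intro i
        rw [hadd1]
        exact hc.1 i
      · intro i
        rw [hadd2, hadd3]
        exact hc.2 i
  · rw [if_neg]
    · by_cases hle : fj ≤ m
      · rw [if_pos hle, if_neg]
        · rw [mul_zero]
        · intro ⟨c1, c2⟩
          refine hc ⟨fun i => ?_, fun i => ?_⟩
          · have := c1 i
            rw [hsub1] at this
            exact this
          · have := c2 i
            rw [hsub2, hsub3] at this
            have hj1 := hfj_le.1 hle
            rcases eq_or_ne i j with rfl | hij
            · rw [hifj] at this ⊢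
              omega
            · rw [if_neg hij] at this ⊢
              omega
      · rw [if_neg hle, mul_zero]
    · intro ⟨c1, c2⟩
      refine hc ⟨fun i => ?_, fun i => ?_⟩
      · have := c1 i
        rw [hadd1] at this
        exact this
      · have := c2 i
        rw [hadd2, hadd3] at this
        exact this

lemma pd_pv_substQP3 {n : ℕ} (j : Fin n) (P : MvPowerSeries (Fin n) ℂ) :
    pd (Sum.inr (Sum.inr j)) (substQP3 P)
      = substQP3 (pd j P) * X (Sum.inr (Sum.inl j)) := by
  classical
  ext m
  rw [coeff_pd, X_def, coeff_mul_monomial]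
  set ej : (Fin n ⊕ (Fin n ⊕ Fin n)) →₀ ℕ := Finsupp.single (Sum.inr (Sum.inl j)) 1 with hej
  set fj : (Fin n ⊕ (Fin n ⊕ Fin n)) →₀ ℕ := Finsupp.single (Sum.inr (Sum.inr j)) 1 with hfj
  have hadd1 : ∀ i : Fin n, (m + fj) (Sum.inl i) = m (Sum.inl i) := by
    intro i; rw [Finsupp.add_apply, hfj, Finsupp.single_apply]; simp
  have hadd2 : ∀ i : Fin n, (m + fj) (Sum.inr (Sum.inl i)) = m (Sum.inr (Sum.inl i)) := by
    intro i; rw [Finsupp.add_apply, hfj, Finsupp.single_apply]; simp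
  have hadd3 : ∀ i : Fin n, (m + fj) (Sum.inr (Sum.inr i))
      = m (Sum.inr (Sum.inr i)) + (if i = j then 1 else 0) := by
    intro i; rw [Finsupp.add_apply, hfj, Finsupp.single_apply]
    congr 1
    simp [eq_comm]
  have hsub1 : ∀ i : Fin n, (m - ej) (Sum.inl i) = m (Sum.inl i) := by
    intro i; rw [Finsupp.tsub_apply, hej, Finsupp.single_apply]; simp
  have hsub2 : ∀ i : Fin n, (m - ej) (Sum.inr (Sum.inl i))
      = m (Sum.inr (Sum.inl i)) - (if i = j then 1 else 0) := by
    intro i; rw [Finsupp.tsub_apply, hej, Finsupp.single_apply]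
    congr 1
    simp [eq_comm]
  have hsub3 : ∀ i : Fin n, (m - ej) (Sum.inr (Sum.inr i)) = m (Sum.inr (Sum.inr i)) := by
    intro i; rw [Finsupp.tsub_apply, hej, Finsupp.single_apply]; simp
  have hej_le : ej ≤ m ↔ 1 ≤ m (Sum.inr (Sum.inl j)) := by
    rw [hej, Finsupp.single_le_iff]
  have hifj : (if j = j then 1 else 0) = 1 := by simp
  simp only [coeff_apply, mul_one]
  unfold substQP3
  by_cases hc : (∀ i : Fin n, m (Sum.inl i) = 0) ∧
      (∀ i : Fin n, m (Sum.inr (Sum.inl i)) = m (Sum.inr (Sum.inr i)) + (if i = j then 1 else 0))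
  · have hqj : 1 ≤ m (Sum.inr (Sum.inl j)) := by
      have h2 := hc.2 j
      rw [hifj] at h2
      omega
    rw [if_pos, if_pos (hej_le.2 hqj), if_pos]
    · rw [coeff_pd]
      have hK'j : (Finsupp.comapDomain (fun i : Fin n => Sum.inr (Sum.inl i)) (m - ej)
          ((Sum.inr_injective.comp Sum.inl_injective).injOn)) j
          = m (Sum.inr (Sum.inl j)) - 1 := by
        simp only [Finsupp.comapDomain_apply]
        rw [hsub2 j, hifj]
      have hK : Finsupp.comapDomain (fun i : Fin n => Sum.inr (Sum.inl i)) (m + fj)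
          ((Sum.inr_injective.comp Sum.inl_injective).injOn)
          = Finsupp.comapDomain (fun i : Fin n => Sum.inr (Sum.inl i)) (m - ej)
          ((Sum.inr_injective.comp Sum.inl_injective).injOn) + Finsupp.single j 1 := by
        ext i
        have h2 := hc.2 i
        rcases eq_or_ne i j with rfl | hij
        · rw [hifj] at h2
          simp only [Finsupp.comapDomain_apply, Finsupp.add_apply, Finsupp.tsub_apply, hej, hfj,
            Finsupp.single_apply]
          simp <;> omega
        · rw [if_neg hij] at h2
          simp only [Finsupp.comapDomain_apply, Finsupp.add_apply, Finsupp.tsub_apply, hej, hfj,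
            Finsupp.single_apply]
          simp [hij, Ne.symm hij] <;> omega
      rw [hK'j, hK]
      have hval : (m (Sum.inr (Sum.inr j)) : ℂ) + 1
          = ((m (Sum.inr (Sum.inl j)) - 1 : ℕ) : ℂ) + 1 := by
        have h2 := hc.2 j
        rw [hifj] at h2
        congr 1
        exact_mod_cast congrArg (Nat.cast : ℕ → ℂ) (by omega : m (Sum.inr (Sum.inr j))
          = m (Sum.inr (Sum.inl j)) - 1)
      rw [hval]
    · refine ⟨fun i => by rw [hsub1]; exact hc.1 i, fun i => ?_⟩
      rw [hsub2, hsub3]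
      have h2 := hc.2 i
      omega
    · refine ⟨fun i => by rw [hadd1]; exact hc.1 i, fun i => ?_⟩
      rw [hadd2, hadd3]
      exact hc.2 i
  · rw [if_neg]
    · by_cases hle : ej ≤ m
      · rw [if_pos hle, if_neg]
        · rw [mul_zero]
        · intro ⟨c1, c2⟩
          refine hc ⟨fun i => by have := c1 i; rwa [hsub1] at this, fun i => ?_⟩
          have := c2 i
          rw [hsub2, hsub3] at this
          have hj1 := hej_le.1 hle
          rcases eq_or_ne i j with rfl | hij
          · rw [hifj] at this ⊢
            omega
          · rw [if_neg hij] at this ⊢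
            omega
      · rw [if_neg hle, mul_zero]
    · intro ⟨c1, c2⟩
      refine hc ⟨fun i => by have := c1 i; rwa [hadd1] at this, fun i => ?_⟩
      have := c2 i
      rw [hadd2, hadd3] at this
      exact this

lemma pd_qv_gen {n : ℕ} (i j : Fin n) :
    pd (Sum.inr (Sum.inl j)) ((X (Sum.inr (Sum.inl i)) * X (Sum.inr (Sum.inr i)) - X (Sum.inl i))
      : MvPowerSeries (Fin n ⊕ (Fin n ⊕ Fin n)) ℂ)
    = if i = j then X (Sum.inr (Sum.inr j)) else 0 := by
  classical
  have hXX : (X (Sum.inr (Sum.inl i)) * X (Sum.inr (Sum.inr i))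
      : MvPowerSeries (Fin n ⊕ (Fin n ⊕ Fin n)) ℂ)
      = monomial (Finsupp.single (Sum.inr (Sum.inl i)) 1
        + Finsupp.single (Sum.inr (Sum.inr i)) 1) 1 := by
    rw [X_def, X_def, monomial_mul_monomial, one_mul]
  rw [hXX, X_def, pd_sub, pd_monomial, pd_monomial]
  have h1 : (Finsupp.single (Sum.inl i : Fin n ⊕ (Fin n ⊕ Fin n)) 1) (Sum.inr (Sum.inl j)) = 0 := by
    rw [Finsupp.single_apply]
    simp
  rw [h1, Nat.cast_zero, zero_smul, sub_zero]
  rcases eq_or_ne i j with rfl | hij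
  · have h2 : ((Finsupp.single (Sum.inr (Sum.inl i)) 1
        + Finsupp.single (Sum.inr (Sum.inr i)) 1 : (Fin n ⊕ (Fin n ⊕ Fin n)) →₀ ℕ)) (Sum.inr (Sum.inl i)) = 1 := by
      rw [Finsupp.add_apply, Finsupp.single_apply, Finsupp.single_apply]
      simp
    rw [h2, Nat.cast_one, one_smul, if_pos rfl, add_tsub_cancel_left, ← X_def]
  · have h2 : ((Finsupp.single (Sum.inr (Sum.inl i)) 1
        + Finsupp.single (Sum.inr (Sum.inr i)) 1 : (Fin n ⊕ (Fin n ⊕ Fin n)) →₀ ℕ)) (Sum.inr (Sum.inl j)) = 0 := by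
      rw [Finsupp.add_apply, Finsupp.single_apply, Finsupp.single_apply]
      simp [hij]
    rw [h2, Nat.cast_zero, zero_smul, if_neg hij]

lemma pd_pv_gen {n : ℕ} (i j : Fin n) :
    pd (Sum.inr (Sum.inr j)) ((X (Sum.inr (Sum.inl i)) * X (Sum.inr (Sum.inr i)) - X (Sum.inl i))
      : MvPowerSeries (Fin n ⊕ (Fin n ⊕ Fin n)) ℂ)
    = if i = j then X (Sum.inr (Sum.inl j)) else 0 := by
  classical
  have hXX : (X (Sum.inr (Sum.inl i)) * X (Sum.inr (Sum.inr i))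
      : MvPowerSeries (Fin n ⊕ (Fin n ⊕ Fin n)) ℂ)
      = monomial (Finsupp.single (Sum.inr (Sum.inl i)) 1
        + Finsupp.single (Sum.inr (Sum.inr i)) 1) 1 := by
    rw [X_def, X_def, monomial_mul_monomial, one_mul]
  rw [hXX, X_def, pd_sub, pd_monomial, pd_monomial]
  have h1 : (Finsupp.single (Sum.inl i : Fin n ⊕ (Fin n ⊕ Fin n)) 1) (Sum.inr (Sum.inr j)) = 0 := by
    rw [Finsupp.single_apply]
    simp
  rw [h1, Nat.cast_zero, zero_smul, sub_zero]
  rcases eq_or_ne i j with rfl | hij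
  · have h2 : ((Finsupp.single (Sum.inr (Sum.inl i)) 1
        + Finsupp.single (Sum.inr (Sum.inr i)) 1 : (Fin n ⊕ (Fin n ⊕ Fin n)) →₀ ℕ)) (Sum.inr (Sum.inr i)) = 1 := by
      rw [Finsupp.add_apply, Finsupp.single_apply, Finsupp.single_apply]
      simp
    rw [h2, Nat.cast_one, one_smul, if_pos rfl, add_tsub_cancel_right, ← X_def]
  · have h2 : ((Finsupp.single (Sum.inr (Sum.inl i)) 1
        + Finsupp.single (Sum.inr (Sum.inr i)) 1 : (Fin n ⊕ (Fin n ⊕ Fin n)) →₀ ℕ)) (Sum.inr (Sum.inr j)) = 0 := by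
      rw [Finsupp.add_apply, Finsupp.single_apply, Finsupp.single_apply]
      simp [hij]
    rw [h2, Nat.cast_zero, zero_smul, if_neg hij]

lemma pd_qv_S {n : ℕ} (j : Fin n) (P : MvPowerSeries (Fin n) ℂ) :
    pd (Sum.inr (Sum.inl j)) (∑ i : Fin n, substL (pd i P) *
        (X (Sum.inr (Sum.inl i)) * X (Sum.inr (Sum.inr i)) - X (Sum.inl i)))
      = substL (pd j P) * X (Sum.inr (Sum.inr j)) := by
  classical
  rw [pd_sum]
  have h : ∀ i : Fin n, pd (Sum.inr (Sum.inl j)) (substL (pd i P) *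
      (X (Sum.inr (Sum.inl i)) * X (Sum.inr (Sum.inr i)) - X (Sum.inl i)))
      = if i = j then substL (pd i P) * X (Sum.inr (Sum.inr j)) else 0 := by
    intro i
    rw [pd_inr_mul _ _ (substL_lonly (pd i P)) (Sum.inl j), pd_qv_gen]
    rcases eq_or_ne i j with rfl | hij
    · rw [if_pos rfl, if_pos rfl]
    · rw [if_neg hij, if_neg hij, mul_zero]
  rw [Finset.sum_congr rfl (fun i _ => h i), Finset.sum_ite_eq' Finset.univ j
    (fun i => substL (pd i P) * X (Sum.inr (Sum.inr j))), if_pos (Finset.mem_univ j)]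

lemma pd_pv_S {n : ℕ} (j : Fin n) (P : MvPowerSeries (Fin n) ℂ) :
    pd (Sum.inr (Sum.inr j)) (∑ i : Fin n, substL (pd i P) *
        (X (Sum.inr (Sum.inl i)) * X (Sum.inr (Sum.inr i)) - X (Sum.inl i)))
      = substL (pd j P) * X (Sum.inr (Sum.inl j)) := by
  classical
  rw [pd_sum]
  have h : ∀ i : Fin n, pd (Sum.inr (Sum.inr j)) (substL (pd i P) *
      (X (Sum.inr (Sum.inl i)) * X (Sum.inr (Sum.inr i)) - X (Sum.inl i)))
      = if i = j then substL (pd i P) * X (Sum.inr (Sum.inl j)) else 0 := by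
    intro i
    rw [pd_inr_mul _ _ (substL_lonly (pd i P)) (Sum.inr j), pd_pv_gen]
    rcases eq_or_ne i j with rfl | hij
    · rw [if_pos rfl, if_pos rfl]
    · rw [if_neg hij, if_neg hij, mul_zero]
  rw [Finset.sum_congr rfl (fun i _ => h i), Finset.sum_ite_eq' Finset.univ j
    (fun i => substL (pd i P) * X (Sum.inr (Sum.inl j))), if_pos (Finset.mem_univ j)]

/-- **Equality of induced hamiltonian derivations.** For `P ∈ ℂ[[X₁,…,Xₙ]]` and
`gᵢ(λ) = (∂P/∂Xᵢ)(λ₁,…,λₙ)`, the hamiltonian derivations of `P(q₁p₁,…,qₙpₙ)` and of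
`Σᵢ gᵢ(λ)(qᵢpᵢ − λᵢ)` coincide as derivations of `ℂ[[λ,q,p]]/I`:
`{F, P(q₁p₁,…,qₙpₙ)} − {F, Σᵢ gᵢ(λ)(qᵢpᵢ − λᵢ)} ∈ I` for every `F`. -/
theorem hamiltonian_derivations_agree_mod_I (n : ℕ) (P : MvPowerSeries (Fin n) ℂ)
    (F : MvPowerSeries (Fin n ⊕ (Fin n ⊕ Fin n)) ℂ) :
    pois3 F (substQP3 P) -
      pois3 F (∑ i : Fin n, substL (pd i P) *
        (X (Sum.inr (Sum.inl i)) * X (Sum.inr (Sum.inr i)) - X (Sum.inl i)))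
∈ pqIdeal n := by
  unfold pois3
  rw [← Finset.sum_sub_distrib]
  apply Ideal.sum_mem
  intro j _
  rw [pd_qv_substQP3, pd_pv_substQP3, pd_qv_S, pd_pv_S]
  have hD : substQP3 (pd j P) - substL (pd j P) ∈ pqIdeal n := substQP3_sub_substL_mem _
  have hr : (pd (Sum.inr (Sum.inl j)) F * (substQP3 (pd j P) * X (Sum.inr (Sum.inl j)))
        - pd (Sum.inr (Sum.inr j)) F * (substQP3 (pd j P) * X (Sum.inr (Sum.inr j))))
      - (pd (Sum.inr (Sum.inl j)) F * (substL (pd j P) * X (Sum.inr (Sum.inl j)))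
        - pd (Sum.inr (Sum.inr j)) F * (substL (pd j P) * X (Sum.inr (Sum.inr j))))
      = (pd (Sum.inr (Sum.inl j)) F * X (Sum.inr (Sum.inl j)))
          * (substQP3 (pd j P) - substL (pd j P))
        - (pd (Sum.inr (Sum.inr j)) F * X (Sum.inr (Sum.inr j)))
          * (substQP3 (pd j P) - substL (pd j P)) := by
    ring
  rw [hr]
  exact Ideal.sub_mem _ (Ideal.mul_mem_left _ _ hD) (Ideal.mul_mem_left _ _ hD)
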